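/- Let r, k, α, φ > 0 and x₀ > 0. Suppose y, z : [0,∞) → ℝ are continuous, nonnegative, and y(t) → 0, z(t) → 0 as t → ∞, and x : [0,∞) → ℝ is positive, continuous, differentiable on (0,∞) with x(0) = x₀ and x′(t) = r·x(t)·(1 − x(t)/k) − α·x(t)·y(t) − φ·α·x(t)·z(t). Then x(t) → k as t → ∞. -/

import Mathlib

open Filter

/-- Final step in the proof of global stability of the pest-free solution:
once the pest populations `y` and `z` tend to zero, the crop biomass `x`,
obeying `x' = r·x·(1 − x/k) − α·x·y − φ·α·x·z`, converges to the carrying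
capacity `k`. -/
theorem crop_tendsto_carrying_capacity (r k α φ x₀ : ℝ)
    (hr : 0 < r) (hk : 0 < k) (hα : 0 < α) (hφ : 0 < φ) (hx₀ : 0 < x₀)
    (y z : ℝ → ℝ)
    (hycont : ContinuousOn y (Set.Ici 0)) (hzcont : ContinuousOn z (Set.Ici 0))
    (hynonneg : ∀ t ≥ (0:ℝ), 0 ≤ y t) (hznonneg : ∀ t ≥ (0:ℝ), 0 ≤ z t)
    (hy0 : Tendsto y atTop (nhds 0)) (hz0 : Tendsto z atTop (nhds 0))
    (x : ℝ → ℝ)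
    (hpos : ∀ t ≥ (0:ℝ), 0 < x t)
    (hcont : ContinuousOn x (Set.Ici 0))
    (hx0 : x 0 = x₀)
    (hderiv : ∀ t > (0:ℝ), HasDerivAt x
      (r * x t * (1 - x t / k) - α * x t * y t - φ * α * x t * z t) t) :
    Tendsto x atTop (nhds k) := by
  set g : ℝ → ℝ := fun t => α * y t + φ * α * z t with hgdef
  set w : ℝ → ℝ := fun t => (x t)⁻¹ - 1/k with hwdef
  have hgnonneg : ∀ t ≥ (0:ℝ), 0 ≤ g t := fun t ht =>
    add_nonneg (mul_nonneg hα.le (hynonneg t ht))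
      (mul_nonneg (mul_nonneg hφ.le hα.le) (hznonneg t ht))
  have hg0 : Tendsto g atTop (nhds 0) := by
    have := (hy0.const_mul α).add (hz0.const_mul (φ * α))
    simpa using this
  -- derivative of w
  have hw' : ∀ t > (0:ℝ), HasDerivAt w ((g t - r) * w t + g t / k) t := by
    intro t ht
    have hxne : x t ≠ 0 := (hpos t ht.le).ne'
    have h1 := ((hderiv t ht).inv hxne).sub_const (1/k)
    refine h1.congr_deriv ?_
    simp only [hwdef, hgdef]
    field_simp
    ring
  -- key estimate: |w t| < ε eventually, for every ε > 0
  have key : ∀ ε > (0:ℝ), ∀ᶠ t in atTop, |w t| < ε := by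
    intro ε hε
    obtain ⟨m, hm, hmr, hmε⟩ : ∃ m : ℝ, 0 < m ∧ m ≤ r/2 ∧ m ≤ r * k * ε / 4 :=
      ⟨min (r/2) (r * k * ε / 4), lt_min (half_pos hr) (by positivity),
        min_le_left _ _, min_le_right _ _⟩
    obtain ⟨T₀, hT₀⟩ : ∃ T₀ : ℝ, ∀ t ≥ T₀, g t < m :=
      eventually_atTop.mp (hg0 (Iio_mem_nhds hm))
    set T : ℝ := max T₀ 1 with hTdef
    have hT1 : (1:ℝ) ≤ T := le_max_right _ _
    have hT0 : (0:ℝ) < T := lt_of_lt_of_le one_pos hT1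
    have hTg : ∀ t ≥ T, g t ≤ m := fun t ht => (hT₀ t (le_trans (le_max_left _ _) ht)).le
    set K : ℝ := -(r/2) with hKdef
    have hKne : K ≠ 0 := by
      simp only [hKdef]
      exact neg_ne_zero.mpr (ne_of_gt (half_pos hr))
    set δ : ℝ := |w T| with hδdef
    -- Grönwall estimate on [T, s]
    have gron : ∀ s ≥ T, |w s| ≤ δ * Real.exp (K * (s - T)) + 2 * m / (r * k) := by
      intro s hs
      have hsub : Set.Icc T s ⊆ Set.Ici (0:ℝ) := fun u hu => le_trans hT0.le hu.1
      have hwcont : ContinuousOn w (Set.Icc T s) := by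
        apply ContinuousOn.sub
        · exact ((hcont.mono hsub).inv₀ fun u hu => (hpos u (hsub hu)).ne')
        · exact continuousOn_const
      have habs : ContinuousOn (fun t => |w t|) (Set.Icc T s) :=
        continuous_abs.comp_continuousOn hwcont
      have main := le_gronwallBound_of_liminf_deriv_right_le
        (f := fun t => |w t|) (f' := fun t => (g t - r) * |w t| + g t / k)
        (δ := δ) (K := K) (ε := m / k) (a := T) (b := s) habs
        (by
          intro u hu ρ hρ
          have hupos : (0:ℝ) < u := lt_of_lt_of_le hT0 hu.1
          have hu0 : (0:ℝ) ≤ u := hupos.le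
          have hwu := hw' u hupos
          have hgk : (0:ℝ) ≤ g u / k := div_nonneg (hgnonneg u hu0) hk.le
          have hρ' : (g u - r) * |w u| + g u / k < ρ := hρ
          rcases lt_trichotomy (w u) 0 with h | h | h
          · -- w u < 0 : |w| = -w near u
            have hev : (fun t => |w t|) =ᶠ[nhds u] fun t => -(w t) := by
              have hlt : ∀ᶠ t in nhds u, w t < 0 := hwu.continuousAt (Iio_mem_nhds h)
              filter_upwards [hlt] with t ht using abs_of_neg ht
            have hder : HasDerivAt (fun t => |w t|)
                (-((g u - r) * w u + g u / k)) u :=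
              hwu.neg.congr_of_eventuallyEq hev
            have hlt : -((g u - r) * w u + g u / k) < ρ := by
              have : (g u - r) * |w u| = -((g u - r) * w u) := by
                rw [abs_of_neg h]; ring
              rw [this] at hρ'
              linarith
            have := hder.hasDerivWithinAt.liminf_right_slope_le hlt
            refine this.mono fun t ht => ?_
            rwa [slope_def_field, div_eq_inv_mul] at ht
          · -- w u = 0 : use the norm slope lemma
            have hn : ‖(g u - r) * w u + g u / k‖ < ρ := by
              rw [h, mul_zero, zero_add, Real.norm_eq_abs, abs_of_nonneg hgk]
              simpa [h] using hρ'
            have := hwu.hasDerivWithinAt.liminf_right_slope_norm_le hn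
            refine this.mono fun t ht => ?_
            simpa [Real.norm_eq_abs] using ht
          · -- w u > 0 : |w| = w near u
            have hev : (fun t => |w t|) =ᶠ[nhds u] w := by
              have hlt : ∀ᶠ t in nhds u, 0 < w t := hwu.continuousAt (Ioi_mem_nhds h)
              filter_upwards [hlt] with t ht using abs_of_pos ht
            have hder : HasDerivAt (fun t => |w t|)
                ((g u - r) * w u + g u / k) u :=
              hwu.congr_of_eventuallyEq hev
            have hlt : (g u - r) * w u + g u / k < ρ := by
              rwa [abs_of_pos h] at hρ'
            have := hder.hasDerivWithinAt.liminf_right_slope_le hlt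
            refine this.mono fun t ht => ?_
            rwa [slope_def_field, div_eq_inv_mul] at ht)
        le_rfl
        (by
          intro u hu
          have hu0 : (0:ℝ) ≤ u := le_trans hT0.le hu.1
          have hgm : g u ≤ m := hTg u hu.1
          have habs0 : (0:ℝ) ≤ |w u| := abs_nonneg _
          have h1 : (g u - r) * |w u| ≤ K * |w u| := by
            apply mul_le_mul_of_nonneg_right _ habs0
            have hK2 : K = -(r/2) := hKdef
            clear_value g w K
            linarith [hmr, hgm, hK2]
          have h2 : g u / k ≤ m / k := by gcongr
          exact add_le_add h1 h2)
      have hmem : s ∈ Set.Icc T s := ⟨hs, le_rfl⟩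
      have hb := main s hmem
      rw [gronwallBound_of_K_ne_0 hKne] at hb
      have hexp1 : Real.exp (K * (s - T)) ≤ 1 := by
        apply Real.exp_le_one_iff.mpr
        apply mul_nonpos_of_nonpos_of_nonneg
        · simp only [hKdef]; linarith
        · linarith
      have hexp0 : (0:ℝ) < Real.exp (K * (s - T)) := Real.exp_pos _
      have heq : m / k / K * (Real.exp (K * (s - T)) - 1)
          = 2 * m / (r * k) * (1 - Real.exp (K * (s - T))) := by
        simp only [hKdef]
        field_simp
        ring
      have hle : m / k / K * (Real.exp (K * (s - T)) - 1) ≤ 2 * m / (r * k) := by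
        rw [heq]
        have h2mrk : (0:ℝ) ≤ 2 * m / (r * k) := by positivity
        nlinarith
      calc |w s| ≤ δ * Real.exp (K * (s - T)) + m / k / K * (Real.exp (K * (s - T)) - 1) := hb
        _ ≤ δ * Real.exp (K * (s - T)) + 2 * m / (r * k) := by linarith
    -- now conclude eventual smallness
    have h2m : 2 * m / (r * k) ≤ ε / 2 := by
      rw [div_le_div_iff₀ (by positivity) (by norm_num)]
      nlinarith [hmε]
    have hexp : Tendsto (fun s => δ * Real.exp (K * (s - T))) atTop (nhds 0) := by
      have h1 : Tendsto (fun s : ℝ => K * (s - T)) atTop atBot := by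
        apply Tendsto.const_mul_atTop_of_neg
        · simp only [hKdef]; linarith
        · exact tendsto_atTop_add_const_right _ _ tendsto_id
      have h2 := Real.tendsto_exp_atBot.comp h1
      have := h2.const_mul δ
      simpa using this
    have hev : ∀ᶠ s in atTop, δ * Real.exp (K * (s - T)) < ε / 2 :=
      hexp (Iio_mem_nhds (half_pos hε))
    filter_upwards [hev, eventually_ge_atTop T] with s h1 h2
    have := gron s h2
    linarith
  -- convert to a limit
  have hwlim : Tendsto w atTop (nhds 0) := by
    rw [Metric.tendsto_nhds]
    intro ε hε
    filter_upwards [key ε hε] with t ht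
    simpa [Real.dist_eq] using ht
  have hvlim : Tendsto (fun t => w t + 1/k) atTop (nhds (1/k)) := by
    have h := hwlim.add_const (1/k)
    rwa [zero_add] at h
  have hkne : (1:ℝ)/k ≠ 0 := by positivity
  have hinv : Tendsto (fun t => (w t + 1/k)⁻¹) atTop (nhds ((1/k)⁻¹)) :=
    hvlim.inv₀ hkne
  rw [one_div, inv_inv] at hinv
  refine hinv.congr' ?_
  filter_upwards [eventually_ge_atTop (0:ℝ)] with t ht
  show (w t + k⁻¹)⁻¹ = x t
  have hx : w t + k⁻¹ = (x t)⁻¹ := by simp [hwdef, one_div]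
  rw [hx, inv_inv]
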